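/- Let x ≤ w in S_n with x(i) < x(j) for i < j, and let t = t_{i,j}. Then x < x·t ≤ w if and only if rk_x(p) > rk_w(p) for every point p in the half-open rectangle [(i, x(i)), (j, x(j))) = {(a,b) : i ≤ a < j, x(i) ≤ b < x(j)}. -/

import Mathlib

open Equiv

/-- Rank function: `rk w i j = #{u = 1,...,i : w(u) ≤ j}` (1-based via `Fin`). -/
def rk {n : ℕ} (w : Equiv.Perm (Fin n)) (i j : ℕ) : ℕ :=
  (Finset.univ.filter (fun u : Fin n => u.val + 1 ≤ i ∧ (w u).val + 1 ≤ j)).card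

/-- Coxeter length = number of inversions. -/
def len {n : ℕ} (w : Equiv.Perm (Fin n)) : ℕ :=
  (Finset.univ.filter (fun p : Fin n × Fin n => p.1 < p.2 ∧ w p.2 < w p.1)).card

/-- A transposition. -/
def IsTransposition {n : ℕ} (t : Equiv.Perm (Fin n)) : Prop :=
  ∃ i j : Fin n, i ≠ j ∧ t = Equiv.swap i j

/-- Bruhat order: generated by `x → x·t` for transpositions `t` increasing the length. -/
def bruhatLE {n : ℕ} : Equiv.Perm (Fin n) → Equiv.Perm (Fin n) → Prop :=
  Relation.ReflTransGen (fun x y => ∃ t, IsTransposition t ∧ y = x * t ∧ len x < len y)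

/-- Strict Bruhat order. -/
def bruhatLT {n : ℕ} (x y : Equiv.Perm (Fin n)) : Prop := bruhatLE x y ∧ x ≠ y

/-- Difference function `d_w(p,p')`. -/
def dOf {n : ℕ} (w : Equiv.Perm (Fin n)) (p q : ℕ × ℕ) : ℤ :=
  (rk w p.1 p.2 : ℤ) + rk w q.1 q.2 - rk w p.1 q.2 - rk w q.1 p.2

/-- Strictly comparable points: `(i'−i)(j'−j) > 0`. -/
def SCmp (p q : ℕ × ℕ) : Prop := (p.1 < q.1 ∧ p.2 < q.2) ∨ (q.1 < p.1 ∧ q.2 < p.2)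

/-- Corners of the rectangle spanned by `p`, `q`. -/
def corners (p q : ℕ × ℕ) : Set (ℕ × ℕ) := {(p.1, q.2), (q.1, p.2)}


section Aux
open Finset

lemma rk_eq_sum {n : ℕ} (w : Equiv.Perm (Fin n)) (a b : ℕ) :
    rk w a b = ∑ u : Fin n, (if u.val + 1 ≤ a ∧ (w u).val + 1 ≤ b then 1 else 0) :=
  Finset.card_filter _ _

lemma sum_split_two {n : ℕ} {M : Type*} [AddCommMonoid M] (i j : Fin n) (h : i ≠ j)
    (f : Fin n → M) :
    ∑ u : Fin n, f u = f i + (f j + ∑ u ∈ (Finset.univ.erase i).erase j, f u) := by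
  rw [Finset.add_sum_erase _ f (by simp [Finset.mem_erase, h.symm] : j ∈ Finset.univ.erase i)]
  rw [Finset.add_sum_erase _ f (Finset.mem_univ i)]

lemma rk_mul_swap {n : ℕ} (x : Equiv.Perm (Fin n)) (i j : Fin n) (hij : i < j)
    (hx : x i < x j) (a b : ℕ) :
    rk (x * Equiv.swap i j) a b
      + (if (i.val + 1 ≤ a ∧ a ≤ j.val) ∧ ((x i).val + 1 ≤ b ∧ b ≤ (x j).val) then 1 else 0)
      = rk x a b := by
  have hne : i ≠ j := ne_of_lt hij
  rw [rk_eq_sum, rk_eq_sum, sum_split_two i j hne, sum_split_two i j hne]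
  have hsame : ∑ u ∈ (Finset.univ.erase i).erase j,
      (if u.val + 1 ≤ a ∧ ((x * Equiv.swap i j) u).val + 1 ≤ b then 1 else 0)
      = ∑ u ∈ (Finset.univ.erase i).erase j,
      (if u.val + 1 ≤ a ∧ (x u).val + 1 ≤ b then 1 else 0) := by
    apply Finset.sum_congr rfl
    intro u hu
    simp only [Finset.mem_erase] at hu
    rw [Equiv.Perm.mul_apply, Equiv.swap_apply_of_ne_of_ne hu.2.1 hu.1]
  rw [hsame]
  have h1 : (x * Equiv.swap i j) i = x j := by
    rw [Equiv.Perm.mul_apply, Equiv.swap_apply_left]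
  have h2 : (x * Equiv.swap i j) j = x i := by
    rw [Equiv.Perm.mul_apply, Equiv.swap_apply_right]
  rw [h1, h2]
  have hij' : i.val < j.val := Fin.lt_def.mp hij
  have hx' : (x i).val < (x j).val := Fin.lt_def.mp hx
  split_ifs <;> omega

lemma len_lt_mul_swap {n : ℕ} (x : Equiv.Perm (Fin n)) (i j : Fin n) (hij : i < j)
    (hx : x i < x j) : len x < len (x * Equiv.swap i j) := by
  classical
  set t := Equiv.swap i j with ht
  set A : Finset (Fin n × Fin n) :=
    Finset.univ.filter (fun p : Fin n × Fin n => p.1 < p.2 ∧ x p.2 < x p.1) with hA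
  set B : Finset (Fin n × Fin n) :=
    Finset.univ.filter (fun p : Fin n × Fin n => p.1 < p.2 ∧ (x * t) p.2 < (x * t) p.1) with hB
  have hijA : (i, j) ∉ A := by
    simp only [hA, Finset.mem_filter]
    rintro ⟨-, -, h⟩
    exact absurd hx (not_lt.mpr h.le)
  have key : (insert (i, j) A).card ≤ B.card := by
    set inF : Fin n × Fin n → Prop := fun p => (p.1 = i ∧ p.2 ≤ j) ∨ (p.2 = j ∧ i ≤ p.1) with hinF
    have hdec : DecidablePred inF := fun p => by rw [hinF]; infer_instance
    set Φ : Fin n × Fin n → Fin n × Fin n := fun p => if inF p then p else (t p.1, t p.2) with hΦ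
    -- images of non-inF pairs (with p.1 < p.2) are not inF
    have himg : ∀ p : Fin n × Fin n, p.1 < p.2 → ¬ inF p → ¬ inF (t p.1, t p.2) := by
      rintro ⟨p1, p2⟩ hlt hnF hF
      simp only [hinF] at hnF hF
      push_neg at hnF
      rcases hF with ⟨h1, h2⟩ | ⟨h1, h2⟩
      · -- t p1 = i, so p1 = j
        have hp1 : p1 = j := by
          have := congrArg t h1
          simpa [ht, Equiv.swap_apply_self, Equiv.swap_apply_right] using this
        have hp2j : j < p2 := hp1 ▸ hlt
        have : t p2 = p2 := Equiv.swap_apply_of_ne_of_ne (ne_of_gt (hij.trans hp2j)) (ne_of_gt hp2j)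
        rw [this] at h2
        exact absurd h2 (not_le.mpr hp2j)
      · -- t p2 = j, so p2 = i
        have hp2 : p2 = i := by
          have := congrArg t h1
          simpa [ht, Equiv.swap_apply_self, Equiv.swap_apply_left] using this
        have hp1i : p1 < i := hp2 ▸ hlt
        have : t p1 = p1 :=
          Equiv.swap_apply_of_ne_of_ne (ne_of_lt hp1i) (ne_of_lt (hp1i.trans hij))
        rw [this] at h2
        exact absurd h2 (not_le.mpr hp1i)
    apply Finset.card_le_card_of_injOn Φ
    · -- maps to B
      intro p hp
      have hpd : p = (i, j) ∨ (p.1 < p.2 ∧ x p.2 < x p.1) := by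
        rcases Finset.mem_insert.mp hp with h | h
        · exact Or.inl h
        · simp only [hA, Finset.mem_filter] at h; exact Or.inr h.2
      simp only [Finset.mem_coe, hB, Finset.mem_filter]
      refine ⟨Finset.mem_univ _, ?_⟩
      rcases hpd with rfl | ⟨hlt, hinv⟩
      · have : inF (i, j) := Or.inl ⟨rfl, le_refl j⟩
        simp only [hΦ, if_pos this]
        constructor
        · exact hij
        · simp [ht, Equiv.Perm.mul_apply, Equiv.swap_apply_left, Equiv.swap_apply_right, hx]
      · by_cases hF : inF p
        · simp only [hΦ, if_pos hF]
          refine ⟨hlt, ?_⟩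
          rcases hF with ⟨h1, h2⟩ | ⟨h1, h2⟩
          · -- p.1 = i, p.2 ≤ j ; p.2 ≠ j since x p.2 < x p.1 = x i < x j
            have hp2j : p.2 ≠ j := by
              intro hh; rw [hh, h1] at hinv; exact absurd (hinv.trans hx) (lt_irrefl _)
            have hp2i : p.2 ≠ i := by rw [← h1]; exact ne_of_gt hlt
            rw [h1]
            simp only [Equiv.Perm.mul_apply, ht]
            rw [Equiv.swap_apply_left, Equiv.swap_apply_of_ne_of_ne hp2i hp2j]
            rw [h1] at hinv
            exact hinv.trans hx
          · have hp1i : p.1 ≠ i := by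
              intro hh; rw [hh, h1] at hinv; exact absurd (hinv.trans hx) (lt_irrefl _)
            have hp1j : p.1 ≠ j := by rw [← h1]; exact ne_of_lt hlt
            rw [h1]
            simp only [Equiv.Perm.mul_apply, ht]
            rw [Equiv.swap_apply_right, Equiv.swap_apply_of_ne_of_ne hp1i hp1j]
            rw [h1] at hinv
            exact hx.trans hinv
        · simp only [hΦ, if_neg hF]
          constructor
          · -- t p.1 < t p.2
            simp only [hinF] at hF
            push_neg at hF
            by_cases e1i : p.1 = i
            · have : j < p.2 := hF.1 e1i
              have h2 : t p.2 = p.2 :=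
                Equiv.swap_apply_of_ne_of_ne (ne_of_gt (hij.trans this)) (ne_of_gt this)
              rw [e1i, h2]; simpa [ht, Equiv.swap_apply_left] using this
            · by_cases e1j : p.1 = j
              · have h2 : j < p.2 := e1j ▸ hlt
                have ht2 : t p.2 = p.2 :=
                  Equiv.swap_apply_of_ne_of_ne (ne_of_gt (hij.trans h2)) (ne_of_gt h2)
                rw [e1j, ht2]; simp only [ht, Equiv.swap_apply_right]
                exact hij.trans h2
              · have ht1 : t p.1 = p.1 := Equiv.swap_apply_of_ne_of_ne e1i e1j
                by_cases e2i : p.2 = i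
                · rw [ht1, e2i]
                  simp only [ht, Equiv.swap_apply_left]
                  exact (e2i ▸ hlt).trans hij
                · by_cases e2j : p.2 = j
                  · have : p.1 < i := hF.2 e2j
                    rw [ht1, e2j]; simpa [ht, Equiv.swap_apply_right] using this
                  · rw [ht1, Equiv.swap_apply_of_ne_of_ne e2i e2j]; exact hlt
          · simp only [Equiv.Perm.mul_apply, ht, Equiv.swap_apply_self]
            exact hinv
    · -- injective on insert (i,j) A
      intro p hp q hq heq
      have hpf : p.1 < p.2 := by
        rcases Finset.mem_insert.mp hp with h | h
        · rw [h]; exact hij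
        · simp only [hA, Finset.mem_filter] at h; exact h.2.1
      have hqf : q.1 < q.2 := by
        rcases Finset.mem_insert.mp hq with h | h
        · rw [h]; exact hij
        · simp only [hA, Finset.mem_filter] at h; exact h.2.1
      by_cases hFp : inF p <;> by_cases hFq : inF q
      · simpa [hΦ, if_pos hFp, if_pos hFq] using heq
      · exfalso
        simp only [hΦ, if_pos hFp, if_neg hFq] at heq
        exact himg q hqf hFq (heq ▸ hFp)
      · exfalso
        simp only [hΦ, if_neg hFp, if_pos hFq] at heq
        exact himg p hpf hFp (heq ▸ hFq)
      · simp only [hΦ, if_neg hFp, if_neg hFq, Prod.mk.injEq] at heq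
        have e1 : p.1 = q.1 := t.injective heq.1
        have e2 : p.2 = q.2 := t.injective heq.2
        exact Prod.ext e1 e2
  have hcard : (insert (i, j) A).card = len x + 1 := by
    rw [Finset.card_insert_of_notMem hijA]; rfl
  have : len x + 1 ≤ len (x * t) := by
    rw [← hcard]; exact key
  omega

lemma step_dom_aux {n : ℕ} (x : Equiv.Perm (Fin n)) (c d : Fin n) (hlt : c < d)
    (hlen : len x < len (x * Equiv.swap c d)) :
    ∀ a b, rk (x * Equiv.swap c d) a b ≤ rk x a b := by
  have hne : x c ≠ x d := fun h => (ne_of_lt hlt) (x.injective h)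
  rcases hne.lt_or_gt with hx | hx
  · intro a b
    have := rk_mul_swap x c d hlt hx a b
    split_ifs at this <;> omega
  · exfalso
    have h2 : (x * Equiv.swap c d) c < (x * Equiv.swap c d) d := by
      simp only [Equiv.Perm.mul_apply, Equiv.swap_apply_left, Equiv.swap_apply_right]
      exact hx
    have := len_lt_mul_swap (x * Equiv.swap c d) c d hlt h2
    rw [mul_assoc, Equiv.swap_mul_self, mul_one] at this
    omega

lemma step_dom {n : ℕ} {x y : Equiv.Perm (Fin n)}
    (h : ∃ t, IsTransposition t ∧ y = x * t ∧ len x < len y) :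
    ∀ a b, rk y a b ≤ rk x a b := by
  obtain ⟨t, ⟨c, d, hcd, rfl⟩, rfl, hlen⟩ := h
  rcases hcd.lt_or_gt with hlt | hlt
  · exact step_dom_aux x c d hlt hlen
  · rw [Equiv.swap_comm c d] at hlen ⊢
    exact step_dom_aux x d c hlt hlen

lemma le_dom {n : ℕ} {x w : Equiv.Perm (Fin n)} (h : bruhatLE x w) :
    ∀ a b, rk w a b ≤ rk x a b := by
  induction h with
  | refl => exact fun a b => le_refl _
  | tail _ hbc ih => exact fun a b => le_trans (step_dom hbc a b) (ih a b)

def meas {n : ℕ} (w x : Equiv.Perm (Fin n)) : ℕ :=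
  ∑ a ∈ Finset.range (n+1), ∑ b ∈ Finset.range (n+1), (rk x a b - rk w a b)

lemma dom_to_le {n : ℕ} (w : Equiv.Perm (Fin n)) :
    ∀ (m : ℕ) (x : Equiv.Perm (Fin n)), meas w x < m →
      (∀ a b, rk w a b ≤ rk x a b) → bruhatLE x w := by
  intro m
  induction m with
  | zero => omega
  | succ m ih =>
    intro x hm hdom
    by_cases hxw : x = w
    · subst hxw; exact Relation.ReflTransGen.refl
    -- find first difference i
    have hex : (Finset.univ.filter (fun u : Fin n => x u ≠ w u)).Nonempty := by
      by_contra h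
      rw [Finset.not_nonempty_iff_eq_empty, Finset.filter_eq_empty_iff] at h
      exact hxw (Equiv.ext (fun u => by simpa using h (Finset.mem_univ u)))
    set i : Fin n := (Finset.univ.filter (fun u : Fin n => x u ≠ w u)).min' hex with hi
    have hi_mem : x i ≠ w i := by
      have := Finset.min'_mem _ hex
      rw [Finset.mem_filter] at this
      exact this.2
    have hag : ∀ v : Fin n, v.val < i.val → x v = w v := by
      intro v hv
      by_contra h
      have : i ≤ v := Finset.min'_le _ _ (Finset.mem_filter.mpr ⟨Finset.mem_univ v, h⟩)
      rw [Fin.le_def] at this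
      omega
    -- x i < w i
    have hxiwi : (x i).val < (w i).val := by
      have h := hdom (i.val + 1) ((w i).val + 1)
      rw [rk_eq_sum, rk_eq_sum,
        ← Finset.add_sum_erase _ _ (Finset.mem_univ i),
        ← Finset.add_sum_erase _ _ (Finset.mem_univ i)] at h
      have hs : ∑ v ∈ Finset.univ.erase i,
          (if v.val + 1 ≤ i.val + 1 ∧ (w v).val + 1 ≤ (w i).val + 1 then 1 else 0)
          = ∑ v ∈ Finset.univ.erase i,
          (if v.val + 1 ≤ i.val + 1 ∧ (x v).val + 1 ≤ (w i).val + 1 then 1 else 0) := by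
        apply Finset.sum_congr rfl
        intro v hv
        have hvu : v ≠ i := (Finset.mem_erase.mp hv).1
        by_cases hlt2 : v.val < i.val
        · rw [hag v hlt2]
        · have hnv : ¬ (v.val + 1 ≤ i.val + 1) := by
            have : v.val ≠ i.val := fun hh => hvu (Fin.ext hh)
            omega
          simp [hnv]
      rw [hs] at h
      by_cases hc : (x i).val + 1 ≤ (w i).val + 1
      · have : (x i).val ≠ (w i).val := fun hh => hi_mem (Fin.ext hh)
        omega
      · exfalso
        have e1 : i.val + 1 ≤ i.val + 1 ∧ (w i).val + 1 ≤ (w i).val + 1 := by omega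
        have e2 : ¬(i.val + 1 ≤ i.val + 1 ∧ (x i).val + 1 ≤ (w i).val + 1) := by omega
        rw [if_pos e1, if_neg e2] at h
        omega
    -- choose j minimal with i < j, x i < x j ≤ w i
    have hk0 : x (x.symm (w i)) = w i := Equiv.apply_symm_apply x (w i)
    set S := Finset.univ.filter (fun k : Fin n => i < k ∧ x i < x k ∧ x k ≤ w i) with hS
    have hSne : S.Nonempty := by
      rw [hS]
      refine ⟨x.symm (w i), Finset.mem_filter.mpr ⟨Finset.mem_univ _, ?_, ?_, ?_⟩⟩
      · rw [Fin.lt_def]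
        rcases lt_trichotomy ((x.symm (w i)).val) i.val with h | h | h
        · exfalso
          have := hag _ h
          rw [hk0] at this
          exact absurd (w.injective this.symm) (fun hh => by rw [hh] at h; omega)
        · exfalso
          have : x.symm (w i) = i := Fin.ext h
          rw [this] at hk0
          exact hi_mem hk0
        · exact h
      · rw [hk0, Fin.lt_def]; exact hxiwi
      · rw [hk0]
    set j : Fin n := S.min' hSne with hj_def
    have hj_mem : i < j ∧ x i < x j ∧ x j ≤ w i := by
      have h1 : j ∈ S := Finset.min'_mem S hSne
      have h2 : j ∈ Finset.univ.filter (fun k : Fin n => i < k ∧ x i < x k ∧ x k ≤ w i) := h1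
      exact (Finset.mem_filter.mp h2).2
    obtain ⟨hij, hxij, hxjwi⟩ := hj_mem
    have hjmin : ∀ u : Fin n, i < u → u < j → ¬(x i < x u ∧ x u ≤ w i) := by
      intro u hiu huj hcon
      have hu : u ∈ S := Finset.mem_filter.mpr ⟨Finset.mem_univ u, hiu, hcon⟩
      have : j ≤ u := Finset.min'_le _ _ hu
      exact absurd huj (not_lt.mpr this)
    have hij' : i.val < j.val := Fin.lt_def.mp hij
    have hxij' : (x i).val < (x j).val := Fin.lt_def.mp hxij
    have hxjwi' : (x j).val ≤ (w i).val := Fin.le_def.mp hxjwi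
    -- key claim
    have hclaim : ∀ a b : ℕ, i.val < a → a ≤ j.val → (x i).val < b → b ≤ (x j).val →
        rk w a b < rk x a b := by
      intro a b ha1 ha2 hb1 hb2
      set W := (w i).val + 1 with hW
      have hWdom := hdom a W
      have hterm : ∀ u : Fin n,
          (if u.val + 1 ≤ a ∧ (w u).val + 1 ≤ b then 1 else 0)
          + (if u.val + 1 ≤ a ∧ (x u).val + 1 ≤ W then 1 else 0)
          + (if u = i then 1 else 0)
          ≤ (if u.val + 1 ≤ a ∧ (x u).val + 1 ≤ b then 1 else 0)
          + (if u.val + 1 ≤ a ∧ (w u).val + 1 ≤ W then 1 else 0) := by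
        intro u
        by_cases hui : u = i
        · subst hui
          rw [if_pos rfl]
          split_ifs <;> omega
        · rw [if_neg hui]
          by_cases hua : u.val + 1 ≤ a
          · by_cases hvi : u.val < i.val
            · have hxwu : (x u).val = (w u).val := congrArg Fin.val (hag u hvi)
              split_ifs <;> omega
            · have hui' : i.val < u.val := by
                have : u.val ≠ i.val := fun hh => hui (Fin.ext hh)
                omega
              have huj' : u.val < j.val := by omega
              have htri : (x u).val < (x i).val ∨ (w i).val < (x u).val := by
                have hne2 : (x u).val ≠ (x i).val :=
                  fun hh => hui (x.injective (Fin.ext hh))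
                have := hjmin u (Fin.lt_def.mpr hui') (Fin.lt_def.mpr huj')
                rw [Fin.lt_def, Fin.le_def] at this
                omega
              split_ifs <;> omega
          · split_ifs <;> omega
      have hsum := Finset.sum_le_sum (fun u (_ : u ∈ Finset.univ) => hterm u)
      rw [Finset.sum_add_distrib, Finset.sum_add_distrib, Finset.sum_add_distrib] at hsum
      rw [← rk_eq_sum, ← rk_eq_sum, ← rk_eq_sum, ← rk_eq_sum] at hsum
      have hone : (∑ u : Fin n, if u = i then 1 else 0) = 1 := by simp
      rw [hone] at hsum
      omega
    -- the new permutation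
    have hdom' : ∀ a b, rk w a b ≤ rk (x * Equiv.swap i j) a b := by
      intro a b
      have hrm := rk_mul_swap x i j hij hxij a b
      by_cases hc : ((i.val + 1 ≤ a ∧ a ≤ j.val) ∧ ((x i).val + 1 ≤ b ∧ b ≤ (x j).val))
      · have := hclaim a b (by omega) hc.1.2 (by omega) hc.2.2
        rw [if_pos hc] at hrm
        omega
      · rw [if_neg hc] at hrm
        have := hdom a b
        omega
    have hle2 : ∀ a b, rk (x * Equiv.swap i j) a b ≤ rk x a b := by
      intro a b
      have hrm := rk_mul_swap x i j hij hxij a b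
      split_ifs at hrm <;> omega
    have hmeas : meas w (x * Equiv.swap i j) < meas w x := by
      apply Finset.sum_lt_sum
      · intro a _
        apply Finset.sum_le_sum
        intro b _
        have := hle2 a b
        omega
      · refine ⟨i.val + 1, Finset.mem_range.mpr (by have := i.isLt; omega), ?_⟩
        apply Finset.sum_lt_sum
        · intro b _
          have := hle2 (i.val + 1) b
          omega
        · refine ⟨(x i).val + 1, Finset.mem_range.mpr (by have := (x i).isLt; omega), ?_⟩
          have hrm := rk_mul_swap x i j hij hxij (i.val + 1) ((x i).val + 1)
          rw [if_pos ⟨⟨le_refl _, by omega⟩, ⟨le_refl _, by omega⟩⟩] at hrm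
          have hcl := hclaim (i.val + 1) ((x i).val + 1) (by omega) (by omega) (by omega) (by omega)
          omega
    exact Relation.ReflTransGen.head
      ⟨Equiv.swap i j, ⟨i, j, ne_of_lt hij, rfl⟩, rfl, len_lt_mul_swap x i j hij hxij⟩
      (ih (x * Equiv.swap i j) (by omega) hdom')

end Aux

theorem stmt5 (n : ℕ) (x w : Equiv.Perm (Fin n)) (hxw : bruhatLE x w)
    (i j : Fin n) (hij : i < j) (hx : x i < x j) :
    (bruhatLT x (x * Equiv.swap i j) ∧ bruhatLE (x * Equiv.swap i j) w) ↔
      ∀ a b : ℕ, i.val + 1 ≤ a → a < j.val + 1 → (x i).val + 1 ≤ b → b < (x j).val + 1 →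
        rk w a b < rk x a b := by
  have hne : i ≠ j := ne_of_lt hij
  have hlen := len_lt_mul_swap x i j hij hx
  have hLT : bruhatLT x (x * Equiv.swap i j) := by
    refine ⟨Relation.ReflTransGen.single ⟨Equiv.swap i j, ⟨i, j, hne, rfl⟩, rfl, hlen⟩, ?_⟩
    intro h
    rw [← h] at hlen
    exact lt_irrefl _ hlen
  have hdomx := le_dom hxw
  constructor
  · rintro ⟨-, hle⟩ a b ha1 ha2 hb1 hb2
    have hd := le_dom hle a b
    have hrm := rk_mul_swap x i j hij hx a b
    rw [if_pos ⟨⟨ha1, by omega⟩, ⟨hb1, by omega⟩⟩] at hrm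
    omega
  · intro hR
    refine ⟨hLT, ?_⟩
    apply dom_to_le w (meas w (x * Equiv.swap i j) + 1) _ (by omega)
    intro a b
    have hrm := rk_mul_swap x i j hij hx a b
    by_cases hc : ((i.val + 1 ≤ a ∧ a ≤ j.val) ∧ ((x i).val + 1 ≤ b ∧ b ≤ (x j).val))
    · have := hR a b hc.1.1 (by omega) hc.2.1 (by omega)
      rw [if_pos hc] at hrm
      omega
    · rw [if_neg hc] at hrm
      have := hdomx a b
      omega
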